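/- Let H ⊆ ℝ be a bounded, countably infinite set and let x ∈ ℝ be such that both H^{-x} = H ∩ (−∞, x] and H^{+x} = H ∩ [x, +∞) are infinite. Then x ∈ MS^axs(H) if and only if there exist x₁ ∈ [liminf H^{-x}, limsup H^{-x}] and x₂ ∈ [liminf H^{+x}, limsup H^{+x}] such that x = (x₁ + x₂)/2. -/

import Mathlib

open Filter Topology

/-- The set of accumulation points of `H`. -/
def accPts (H : Set ℝ) : Set ℝ := {x | AccPt x (𝓟 H)}

/-- Arithmetic mean of a finite set of reals. -/
noncomputable def finsetMean (F : Finset ℝ) : ℝ := (∑ x ∈ F, x) / F.card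

/-- `MS^axs(H)`: the set of `x` that are limits of means of `x`-symmetric
approximating sequences for `H`. -/
def MSaxs (H : Set ℝ) : Set ℝ :=
  {x | ∃ Hn : ℕ → Finset ℝ,
    (∀ n, Hn n ⊆ Hn (n + 1)) ∧ (⋃ n, (Hn n : Set ℝ)) = H ∧
    (∀ n, ((Hn n).filter (fun z => z ≤ x)).card = ((Hn n).filter (fun z => x ≤ z)).card) ∧
    Tendsto (fun n => finsetMean (Hn n)) atTop (𝓝 x)}

lemma accPts_subset_closure (S : Set ℝ) : accPts S ⊆ closure S :=
  derivedSet_subset_closure S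

lemma accPts_mono {S T : Set ℝ} (h : S ⊆ T) : accPts S ⊆ accPts T :=
  derivedSet_mono S T h

lemma accPts_nonempty {S : Set ℝ} (hb : Bornology.IsBounded S) (hi : S.Infinite) :
    (accPts S).Nonempty := by
  obtain ⟨M, hM⟩ := (isBounded_iff_forall_norm_le).1 hb
  have hsub : S ⊆ Set.Icc (-M) M := fun z hz => by
    have := hM z hz
    rw [Real.norm_eq_abs, abs_le] at this
    exact ⟨this.1, this.2⟩
  obtain ⟨a, _, ha⟩ := hi.exists_accPt_of_subset_isCompact isCompact_Icc hsub
  exact ⟨a, ha⟩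

lemma isClosed_accPts (S : Set ℝ) : IsClosed (accPts S) := isClosed_derivedSet S

lemma accPt_ball_infinite {S : Set ℝ} {b : ℝ} (h : AccPt b (𝓟 S)) {ε : ℝ} (hε : 0 < ε) :
    (S ∩ Metric.ball b ε).Infinite := by
  intro hfin
  have hacc : AccPt b (𝓟 (Metric.ball b ε ∩ S)) :=
    h.nhds_inter (Metric.ball_mem_nhds b hε)
  rw [accPt_iff_nhds] at hacc
  set D : Set ℝ := Metric.ball b ε ∩ S with hD
  have hDfin : D.Finite := by rwa [Set.inter_comm] at hfin
  have hopen : IsOpen ((D \ {b}) : Set ℝ)ᶜ := (hDfin.subset Set.diff_subset).isClosed.isOpen_compl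
  have hbmem : b ∈ ((D \ {b}) : Set ℝ)ᶜ := fun hb' => hb'.2 rfl
  obtain ⟨y, ⟨hy1, hy2⟩, hy3⟩ := hacc _ (hopen.mem_nhds hbmem)
  exact hy3 (by_contra fun hne => hy1 ⟨hy2, hne⟩)

/-- Bound on a bounded set: `S ⊆ [-M, M]`, `0 ≤ M`. -/
lemma exists_bound {S : Set ℝ} (hb : Bornology.IsBounded S) :
    ∃ M : ℝ, 0 ≤ M ∧ ∀ z ∈ S, |z| ≤ M := by
  obtain ⟨C, hC⟩ := (isBounded_iff_forall_norm_le).1 hb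
  exact ⟨max C 0, le_max_right _ _, fun z hz => le_trans (hC z hz) (le_max_left _ _)⟩

lemma closure_abs_le {S : Set ℝ} {M : ℝ} (hM0 : 0 ≤ M) (hM : ∀ z ∈ S, |z| ≤ M)
    {z : ℝ} (hz : z ∈ closure S) : |z| ≤ M := by
  have hsub : S ⊆ Metric.closedBall 0 M := fun w hw => by
    simpa [Real.dist_eq] using hM w hw
  have := closure_minimal hsub Metric.isClosed_closedBall hz
  simpa [Real.dist_eq] using this

lemma accPts_bddBelow {S : Set ℝ} {M : ℝ} (hM0 : 0 ≤ M) (hM : ∀ z ∈ S, |z| ≤ M) :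
    BddBelow (accPts S) :=
  ⟨-M, fun z hz => neg_le_of_abs_le (closure_abs_le hM0 hM (accPts_subset_closure S hz))⟩

lemma accPts_bddAbove {S : Set ℝ} {M : ℝ} (hM0 : 0 ≤ M) (hM : ∀ z ∈ S, |z| ≤ M) :
    BddAbove (accPts S) :=
  ⟨M, fun z hz => le_of_abs_le (closure_abs_le hM0 hM (accPts_subset_closure S hz))⟩

lemma sInf_accPts_mem {S : Set ℝ} (hb : Bornology.IsBounded S) (hne : (accPts S).Nonempty) :
    sInf (accPts S) ∈ accPts S := by
  obtain ⟨M, hM0, hM⟩ := exists_bound hb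
  exact (isClosed_accPts S).csInf_mem hne (accPts_bddBelow hM0 hM)

lemma sSup_accPts_mem {S : Set ℝ} (hb : Bornology.IsBounded S) (hne : (accPts S).Nonempty) :
    sSup (accPts S) ∈ accPts S := by
  obtain ⟨M, hM0, hM⟩ := exists_bound hb
  exact (isClosed_accPts S).csSup_mem hne (accPts_bddAbove hM0 hM)

/-- Points of a bounded set outside an open interval containing all accumulation
points form a finite set. -/
lemma finite_outside {S : Set ℝ} (hb : Bornology.IsBounded S) {a b ε : ℝ} (hε : 0 < ε)
    (hacc : accPts S ⊆ Set.Icc a b) :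
    (S \ Set.Icc (a - ε) (b + ε)).Finite := by
  by_contra hfin
  have hinf : (S \ Set.Icc (a - ε) (b + ε)).Infinite := hfin
  obtain ⟨M, hM0, hM⟩ := exists_bound (hb.subset Set.diff_subset)
  have hsub : (S \ Set.Icc (a - ε) (b + ε)) ⊆ Set.Icc (-M) M := fun z hz => abs_le.1 (hM z hz)
  obtain ⟨z, _, hz⟩ := hinf.exists_accPt_of_subset_isCompact isCompact_Icc hsub
  have h1 : z ∈ accPts S := derivedSet_mono _ _ Set.diff_subset hz
  have h2 : z ∈ closure (S \ Set.Icc (a - ε) (b + ε)) :=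
    accPts_subset_closure _ hz
  have h3 : z ∈ (Set.Ioo (a - ε) (b + ε))ᶜ := by
    have hsub2 : (S \ Set.Icc (a - ε) (b + ε)) ⊆ (Set.Ioo (a - ε) (b + ε))ᶜ := by
      intro w hw hw2
      exact hw.2 ⟨hw2.1.le, hw2.2.le⟩
    exact closure_minimal hsub2 isOpen_Ioo.isClosed_compl h2
  have h4 := hacc h1
  exact h3 ⟨by linarith [h4.1], by linarith [h4.2]⟩

/-- If `F` has at least `k₀` elements, all in `S`, and all points of `S`
outside `Icc lo hi` lie in a finite set of card `c`, with everything bounded by `M`,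
then the mean of `F` is at most `hi + 2*M*c/k₀`-ish. -/
lemma mean_le_aux {F : Finset ℝ} {S : Set ℝ} (hFS : ↑F ⊆ S)
    {lo hi M : ℝ} (hM0 : 0 ≤ M) (hM : ∀ z ∈ S, |z| ≤ M) (hhi : |hi| ≤ M) (hlo : |lo| ≤ M)
    {T : Finset ℝ} (hT : ∀ z ∈ S, z ∉ Set.Icc lo hi → z ∈ T)
    (hk : 1 ≤ F.card) :
    finsetMean F ≤ hi + 2 * M * T.card / F.card ∧
      lo - 2 * M * T.card / F.card ≤ finsetMean F := by
  set k : ℝ := (F.card : ℝ) with hkdef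
  have hkpos : (0:ℝ) < k := by rw [hkdef]; exact_mod_cast hk
  have hsplit := Finset.sum_filter_add_sum_filter_not F (fun z => z ∈ Set.Icc lo hi)
      (fun z => z)
  have hcard_le : ((F.filter (fun z => z ∉ Set.Icc lo hi)).card : ℝ) ≤ T.card := by
    have : F.filter (fun z => z ∉ Set.Icc lo hi) ⊆ T := by
      intro z hz
      rw [Finset.mem_filter] at hz
      exact hT z (hFS hz.1) hz.2
    exact_mod_cast Finset.card_le_card this
  constructor
  · -- upper bound
    have h1 : ∑ z ∈ F.filter (fun z => z ∈ Set.Icc lo hi), (z - hi) ≤ 0 := by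
      apply Finset.sum_nonpos
      intro z hz
      rw [Finset.mem_filter] at hz
      linarith [hz.2.2]
    have h2 : ∑ z ∈ F.filter (fun z => ¬ z ∈ Set.Icc lo hi), (z - hi) ≤ 2 * M * T.card := by
      calc ∑ z ∈ F.filter (fun z => ¬ z ∈ Set.Icc lo hi), (z - hi)
          ≤ (F.filter (fun z => ¬ z ∈ Set.Icc lo hi)).card • (2 * M) := by
            apply Finset.sum_le_card_nsmul
            intro z hz
            rw [Finset.mem_filter] at hz
            have := hM z (hFS hz.1)
            have h3 := abs_le.1 this
            have h4 := abs_le.1 hhi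
            linarith [h3.2, h4.1]
        _ = ((F.filter (fun z => ¬ z ∈ Set.Icc lo hi)).card : ℝ) * (2 * M) := by
            rw [nsmul_eq_mul]
        _ ≤ (T.card : ℝ) * (2 * M) := by
            apply mul_le_mul_of_nonneg_right hcard_le; linarith
        _ = 2 * M * T.card := by ring
    have hsum : ∑ z ∈ F, (z - hi) ≤ 2 * M * T.card := by
      have := Finset.sum_filter_add_sum_filter_not F (fun z => z ∈ Set.Icc lo hi)
        (fun z => z - hi)
      linarith [this, h1, h2]
    have hsum2 : ∑ z ∈ F, (z - hi) = (∑ z ∈ F, z) - k * hi := by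
      rw [Finset.sum_sub_distrib]
      simp [hkdef, mul_comm]
    rw [finsetMean, div_le_iff₀ hkpos]
    have : 2 * M * T.card / k * k = 2 * M * T.card := by field_simp
    nlinarith [hsum, hsum2]
  · -- lower bound
    have h1 : 0 ≤ ∑ z ∈ F.filter (fun z => z ∈ Set.Icc lo hi), (z - lo) := by
      apply Finset.sum_nonneg
      intro z hz
      rw [Finset.mem_filter] at hz
      linarith [hz.2.1]
    have h2 : -(2 * M * T.card) ≤ ∑ z ∈ F.filter (fun z => ¬ z ∈ Set.Icc lo hi), (z - lo) := by
      calc (-(2 * M * T.card) : ℝ)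
          ≤ -(((F.filter (fun z => ¬ z ∈ Set.Icc lo hi)).card : ℝ) * (2 * M)) := by
            have : ((F.filter (fun z => ¬ z ∈ Set.Icc lo hi)).card : ℝ) * (2*M) ≤ (T.card:ℝ)*(2*M) := by
              apply mul_le_mul_of_nonneg_right hcard_le; linarith
            linarith
        _ ≤ ∑ z ∈ F.filter (fun z => ¬ z ∈ Set.Icc lo hi), (z - lo) := by
            rw [neg_le]
            calc -∑ z ∈ F.filter (fun z => ¬ z ∈ Set.Icc lo hi), (z - lo)
                = ∑ z ∈ F.filter (fun z => ¬ z ∈ Set.Icc lo hi), (lo - z) := by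
                  rw [← Finset.sum_neg_distrib]; congr 1; ext z; ring
              _ ≤ (F.filter (fun z => ¬ z ∈ Set.Icc lo hi)).card • (2 * M) := by
                  apply Finset.sum_le_card_nsmul
                  intro z hz
                  rw [Finset.mem_filter] at hz
                  have h3 := abs_le.1 (hM z (hFS hz.1))
                  have h4 := abs_le.1 hlo
                  linarith [h3.1, h4.2]
              _ = ((F.filter (fun z => ¬ z ∈ Set.Icc lo hi)).card : ℝ) * (2 * M) := by
                  rw [nsmul_eq_mul]
    have hsum : -(2 * M * T.card) ≤ ∑ z ∈ F, (z - lo) := by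
      have := Finset.sum_filter_add_sum_filter_not F (fun z => z ∈ Set.Icc lo hi)
        (fun z => z - lo)
      linarith [this, h1, h2]
    have hsum2 : ∑ z ∈ F, (z - lo) = (∑ z ∈ F, z) - k * lo := by
      rw [Finset.sum_sub_distrib]
      simp [hkdef, mul_comm]
    rw [finsetMean, le_div_iff₀ hkpos]
    have : 2 * M * T.card / k * k = 2 * M * T.card := by field_simp
    nlinarith [hsum, hsum2]

lemma eventually_mean_bounds {S : Set ℝ} (hb : Bornology.IsBounded S) (hi : S.Infinite)
    {ε : ℝ} (hε : 0 < ε) (Fn : ℕ → Finset ℝ) (hFS : ∀ n, ↑(Fn n) ⊆ S)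
    (hcard : Tendsto (fun n => (Fn n).card) atTop atTop) :
    ∀ᶠ n in atTop, finsetMean (Fn n) ≤ sSup (accPts S) + ε ∧
      sInf (accPts S) - ε ≤ finsetMean (Fn n) := by
  obtain ⟨M, hM0, hM⟩ := exists_bound hb
  set a := sInf (accPts S) with ha
  set b := sSup (accPts S) with hbdef
  have hne := accPts_nonempty hb hi
  have hbb := accPts_bddBelow hM0 hM
  have hba := accPts_bddAbove hM0 hM
  have hacc : accPts S ⊆ Set.Icc a b := fun z hz => ⟨csInf_le hbb hz, le_csSup hba hz⟩
  have habs : ∀ z ∈ accPts S, |z| ≤ M := fun z hz =>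
    closure_abs_le hM0 hM (accPts_subset_closure S hz)
  have haM : |a| ≤ M := by
    obtain ⟨w, hw⟩ := id hne
    have h1 : -M ≤ a := le_csInf hne (fun z hz => neg_le_of_abs_le (habs z hz))
    have h2 : a ≤ M := le_trans (csInf_le hbb hw) (le_of_abs_le (habs w hw))
    rw [abs_le]; exact ⟨h1, h2⟩
  have hbM : |b| ≤ M := by
    obtain ⟨w, hw⟩ := id hne
    have h1 : b ≤ M := csSup_le hne (fun z hz => le_of_abs_le (habs z hz))
    have h2 : -M ≤ b := le_trans (neg_le_of_abs_le (habs w hw)) (le_csSup hba hw)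
    rw [abs_le]; exact ⟨h2, h1⟩
  set M' := M + ε with hM'
  have hM'0 : 0 ≤ M' := by linarith
  have hMM' : ∀ z ∈ S, |z| ≤ M' := fun z hz => le_trans (hM z hz) (by linarith)
  have hhiM : |b + ε/2| ≤ M' := by
    rw [abs_le] at hbM ⊢; constructor <;> [linarith [hbM.1]; linarith [hbM.2]]
  have hloM : |a - ε/2| ≤ M' := by
    rw [abs_le] at haM ⊢; constructor <;> [linarith [haM.1]; linarith [haM.2]]
  have hfin := finite_outside hb (by positivity : (0:ℝ) < ε/2) hacc
  set T := hfin.toFinset with hT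
  have hTmem : ∀ z ∈ S, z ∉ Set.Icc (a - ε/2) (b + ε/2) → z ∈ T := by
    intro z hz hz2
    rw [hT, Set.Finite.mem_toFinset]
    exact ⟨hz, hz2⟩
  obtain ⟨N, hN⟩ := exists_nat_gt (4 * M' * (T.card + 1) / ε)
  filter_upwards [hcard.eventually_ge_atTop (max 1 N)] with n hn
  have hk1 : 1 ≤ (Fn n).card := le_trans (le_max_left 1 N) hn
  have hkN : (N : ℝ) ≤ ((Fn n).card : ℝ) := by
    exact_mod_cast le_trans (le_max_right 1 N) hn
  have hkpos : (0:ℝ) < ((Fn n).card : ℝ) := by exact_mod_cast hk1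
  have hdiv : 2 * M' * T.card / ((Fn n).card : ℝ) ≤ ε / 2 := by
    rw [div_le_iff₀ hkpos]
    have h1 : 4 * M' * ((T.card : ℝ) + 1) < ε * ((Fn n).card : ℝ) := by
      rw [div_lt_iff₀ hε] at hN
      calc 4 * M' * ((T.card : ℝ) + 1) < (N:ℝ) * ε := hN
        _ ≤ ((Fn n).card : ℝ) * ε := by apply mul_le_mul_of_nonneg_right hkN hε.le
        _ = ε * ((Fn n).card : ℝ) := by ring
    nlinarith [hM'0, Nat.cast_nonneg (α := ℝ) T.card]
  obtain ⟨hup, hlow⟩ := mean_le_aux (hFS n) hM'0 hMM' hhiM hloM hTmem hk1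
  constructor
  · calc finsetMean (Fn n) ≤ (b + ε/2) + 2 * M' * T.card / ((Fn n).card : ℝ) := hup
      _ ≤ b + ε := by linarith
  · calc a - ε ≤ (a - ε/2) - 2 * M' * T.card / ((Fn n).card : ℝ) := by linarith
      _ ≤ finsetMean (Fn n) := hlow

/-- Recursive construction of an increasing family of finsets. -/
noncomputable def buildSeq (step : ℕ → Finset ℝ → ℝ) (init : Finset ℝ) : ℕ → Finset ℝ
  | 0 => init
  | n + 1 => insert (step n (buildSeq step init n)) (buildSeq step init n)

lemma natSqrt_div_tendsto :
    Tendsto (fun n : ℕ => ((Nat.sqrt n : ℝ))/((n:ℝ)+1)) atTop (𝓝 0) := by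
  rw [Metric.tendsto_atTop]
  intro ε hε
  obtain ⟨K, hK⟩ := exists_nat_gt (1/ε)
  have hK0 : 0 < K := by
    by_contra h
    push_neg at h
    interval_cases K
    simp at hK
    linarith [one_div_pos.2 hε, hK]
  refine ⟨(K+1)^2, fun n hn => ?_⟩
  have hs : K + 1 ≤ Nat.sqrt n := by
    calc K + 1 = Nat.sqrt ((K+1)^2) := (Nat.sqrt_eq' (K+1)).symm
      _ ≤ Nat.sqrt n := Nat.sqrt_le_sqrt hn
  have hs0 : (0:ℝ) < (Nat.sqrt n : ℝ) := by exact_mod_cast Nat.lt_of_lt_of_le (Nat.succ_pos K) hs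
  have hn1 : (0:ℝ) < (n:ℝ) + 1 := by positivity
  have h1 : ((Nat.sqrt n : ℝ))/((n:ℝ)+1) ≤ 1/(Nat.sqrt n : ℝ) := by
    rw [div_le_div_iff₀ hn1 hs0]
    have : Nat.sqrt n * Nat.sqrt n ≤ n := Nat.sqrt_le n
    have : ((Nat.sqrt n : ℝ)) * (Nat.sqrt n : ℝ) ≤ (n:ℝ) := by exact_mod_cast this
    linarith
  have h2 : (1:ℝ)/(Nat.sqrt n : ℝ) ≤ 1/((K:ℝ)+1) := by
    apply one_div_le_one_div_of_le (by positivity)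
    exact_mod_cast hs
  have h3 : (1:ℝ)/((K:ℝ)+1) < ε := by
    rw [div_lt_iff₀ (by positivity)]
    rw [div_lt_iff₀ hε] at hK
    nlinarith
  have h0 : 0 ≤ ((Nat.sqrt n : ℝ))/((n:ℝ)+1) := by positivity
  rw [Real.dist_eq, sub_zero, abs_of_nonneg h0]
  linarith

lemma exists_approx {S : Set ℝ} (hb : Bornology.IsBounded S) (hc : S.Countable)
    (hi : S.Infinite) {t : ℝ}
    (ht : t ∈ Set.Icc (sInf (accPts S)) (sSup (accPts S))) {s₀ : ℝ} (hs₀ : s₀ ∈ S) :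
    ∃ F : ℕ → Finset ℝ, F 0 = {s₀} ∧ (∀ n, F n ⊆ F (n+1)) ∧ (∀ n, (F n).card = n+1) ∧
      (∀ n, ↑(F n) ⊆ S) ∧ (⋃ n, (F n : Set ℝ)) = S ∧
      Tendsto (fun n => finsetMean (F n)) atTop (𝓝 t) := by
  classical
  obtain ⟨e, he⟩ := hc.exists_eq_range hi.nonempty
  have he' : ∀ m, e m ∈ S := fun m => he ▸ Set.mem_range_self m
  obtain ⟨M, hM0, hM⟩ := exists_bound hb
  set α := sInf (accPts S) with hα
  set β := sSup (accPts S) with hβ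
  have hne := accPts_nonempty hb hi
  have hαmem : α ∈ accPts S := sInf_accPts_mem hb hne
  have hβmem : β ∈ accPts S := sSup_accPts_mem hb hne
  have hαM : |α| ≤ M := closure_abs_le hM0 hM (accPts_subset_closure S hαmem)
  have hβM : |β| ≤ M := closure_abs_le hM0 hM (accPts_subset_closure S hβmem)
  have htM : |t| ≤ M := by
    rw [abs_le] at hαM hβM ⊢
    exact ⟨le_trans hαM.1 ht.1, le_trans ht.2 hβM.2⟩
  set C := 2 * M with hC
  have hC0 : 0 ≤ C := by linarith
  have hyC : ∀ y ∈ S, |y - t| ≤ C := fun y hy => by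
    have h1 := abs_le.1 (hM y hy); have h2 := abs_le.1 htM
    rw [abs_le]; constructor <;> [linarith [h1.1, h2.2]; linarith [h1.2, h2.1]]
  -- the step existence
  have hstepex : ∀ (n : ℕ) (G : Finset ℝ), ∃ y : ℝ, y ∈ S ∧ y ∉ G ∧
      ((Nat.sqrt n * Nat.sqrt n = n ∧ e (Nat.sqrt n) ∉ G) → y = e (Nat.sqrt n)) ∧
      (¬(Nat.sqrt n * Nat.sqrt n = n ∧ e (Nat.sqrt n) ∉ G) →
        (finsetMean G ≤ t → |y - β| < 1/((n:ℝ)+2)^2) ∧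
        (¬(finsetMean G ≤ t) → |y - α| < 1/((n:ℝ)+2)^2)) := by
    intro n G
    have hεpos : (0:ℝ) < 1/((n:ℝ)+2)^2 := by positivity
    by_cases hcond : Nat.sqrt n * Nat.sqrt n = n ∧ e (Nat.sqrt n) ∉ G
    · exact ⟨e (Nat.sqrt n), he' _, hcond.2, fun _ => rfl, fun h => absurd hcond h⟩
    · by_cases hmean : finsetMean G ≤ t
      · obtain ⟨y, hy⟩ := ((accPt_ball_infinite hβmem hεpos).diff G.finite_toSet).nonempty
        refine ⟨y, hy.1.1, fun h => hy.2 h, fun h => absurd h hcond, fun _ => ⟨fun _ => ?_, fun h => absurd hmean h⟩⟩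
        have := hy.1.2
        rwa [Metric.mem_ball, Real.dist_eq] at this
      · obtain ⟨y, hy⟩ := ((accPt_ball_infinite hαmem hεpos).diff G.finite_toSet).nonempty
        refine ⟨y, hy.1.1, fun h => hy.2 h, fun h => absurd h hcond, fun _ => ⟨fun h => absurd h hmean, fun _ => ?_⟩⟩
        have := hy.1.2
        rwa [Metric.mem_ball, Real.dist_eq] at this
  choose step hstepS hstepNot hstepIns hstepSteer using hstepex
  set F : ℕ → Finset ℝ := buildSeq step {s₀} with hF
  have hF0 : F 0 = {s₀} := rfl
  have hFsucc : ∀ n, F (n+1) = insert (step n (F n)) (F n) := fun n => rfl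
  have hmono : ∀ n, F n ⊆ F (n+1) := fun n => by rw [hFsucc]; exact Finset.subset_insert _ _
  have hmono' : ∀ {m n}, m ≤ n → F m ⊆ F n := fun {m n} h => by
    induction n with
    | zero => rw [Nat.le_zero.1 h]
    | succ k ih =>
      rcases Nat.lt_or_ge m (k+1) with h'|h'
      · exact (ih (Nat.lt_succ_iff.1 h')).trans (hmono k)
      · rw [Nat.le_antisymm h h']
  have hsub : ∀ n, ↑(F n) ⊆ S := by
    intro n
    induction n with
    | zero => simpa [hF0] using hs₀
    | succ k ih =>
      rw [hFsucc]
      push_cast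
      exact Set.insert_subset (hstepS k (F k)) ih
  have hcard : ∀ n, (F n).card = n + 1 := by
    intro n
    induction n with
    | zero => simp [hF0]
    | succ k ih =>
      rw [hFsucc, Finset.card_insert_of_notMem (hstepNot k (F k)), ih]
  have hunion : (⋃ n, (F n : Set ℝ)) = S := by
    apply Set.Subset.antisymm
    · exact Set.iUnion_subset hsub
    · intro s hs
      rw [he] at hs
      obtain ⟨m, rfl⟩ := hs
      rw [Set.mem_iUnion]
      by_cases hmem : e m ∈ F (m*m)
      · exact ⟨m*m, hmem⟩
      · refine ⟨m*m+1, ?_⟩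
        rw [hFsucc]
        have hcond : Nat.sqrt (m*m) * Nat.sqrt (m*m) = m*m ∧ e (Nat.sqrt (m*m)) ∉ F (m*m) := by
          rw [Nat.sqrt_eq]; exact ⟨rfl, hmem⟩
        have := hstepIns (m*m) (F (m*m)) hcond
        rw [Nat.sqrt_eq] at this
        rw [← this]
        exact Finset.mem_insert_self _ _
  refine ⟨F, hF0, hmono, hcard, hsub, hunion, ?_⟩
  -- convergence of the means
  set A : ℕ → ℝ := fun n => finsetMean (F n) with hA
  have hrec : ∀ n : ℕ, ((n:ℝ)+2) * (A (n+1) - t) = ((n:ℝ)+1) * (A n - t) + (step n (F n) - t) := by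
    intro n
    have h1 : A (n+1) = ((∑ z ∈ F n, z) + step n (F n)) / ((n:ℝ)+2) := by
      rw [hA]
      simp only [finsetMean, hFsucc n, Finset.sum_insert (hstepNot n (F n)),
        Finset.card_insert_of_notMem (hstepNot n (F n)), hcard n]
      push_cast
      ring
    have h2 : A n = (∑ z ∈ F n, z) / ((n:ℝ)+1) := by
      rw [hA]; simp only [finsetMean, hcard n]; push_cast; ring
    have hn2 : ((n:ℝ)+2) ≠ 0 := by positivity
    have hn1 : ((n:ℝ)+1) ≠ 0 := by positivity
    rw [h1, h2]
    field_simp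
    ring
  set u : ℕ → ℝ := fun n => ((n:ℝ)+1) * |A n - t| with hu
  have hu0 : ∀ n, 0 ≤ u n := fun n => by positivity
  have habs : ∀ n : ℕ, u (n+1) = |((n:ℝ)+2) * (A (n+1) - t)| := by
    intro n
    rw [hu, abs_mul, abs_of_nonneg (show (0:ℝ) ≤ (n:ℝ)+2 by positivity)]
    push_cast
    ring
  -- always: u (n+1) ≤ u n + C
  have hstep_bound : ∀ n : ℕ, u (n+1) ≤ u n + C := by
    intro n
    rw [habs n, hrec n]
    calc |((n:ℝ)+1) * (A n - t) + (step n (F n) - t)|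
        ≤ |((n:ℝ)+1) * (A n - t)| + |step n (F n) - t| := abs_add_le _ _
      _ ≤ u n + C := by
          have := hyC _ (hstepS n (F n))
          rw [hu, abs_mul, abs_of_nonneg (by positivity : (0:ℝ) ≤ (n:ℝ)+1)]
          gcongr
  -- steering: u (n+1) ≤ max C (u n + 1/(n+2)^2)
  have hsteer_bound : ∀ n : ℕ, ¬(Nat.sqrt n * Nat.sqrt n = n ∧ e (Nat.sqrt n) ∉ F n) →
      u (n+1) ≤ max C (u n + 1/((n:ℝ)+2)^2) := by
    intro n hcond
    obtain ⟨hsteer1, hsteer2⟩ := hstepSteer n (F n) hcond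
    have hyC' := hyC _ (hstepS n (F n))
    set y := step n (F n)
    set P := ((n:ℝ)+1) * (A n - t) with hP
    set q := y - t with hq
    have hPabs : |P| = u n := by
      rw [hu, hP, abs_mul, abs_of_nonneg (by positivity : (0:ℝ) ≤ (n:ℝ)+1)]
    rw [habs n, hrec n, ← hP, ← hq]
    by_cases hmean : A n ≤ t
    · have hPle : P ≤ 0 := mul_nonpos_of_nonneg_of_nonpos (by positivity) (by linarith)
      have hd := hsteer1 hmean
      have hqlow : -(1/((n:ℝ)+2)^2) ≤ q := by
        have h2 := abs_lt.1 hd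
        have h3 : t ≤ β := ht.2
        rw [hq]; linarith [h2.1]
      rcases le_or_gt 0 (P + q) with hPq|hPq
      · rw [abs_of_nonneg hPq]
        have h4 : P + q ≤ q := by linarith
        have h5 : q ≤ C := by rw [hq]; exact le_of_abs_le hyC'
        exact le_max_of_le_left (by linarith)
      · rw [abs_of_neg hPq]
        have : -(P + q) ≤ -P + 1/((n:ℝ)+2)^2 := by linarith
        have hPn : -P = u n := by rw [← hPabs, abs_of_nonpos hPle]
        exact le_max_of_le_right (by linarith)
    · push_neg at hmean
      have hPge : 0 ≤ P := mul_nonneg (by positivity) (by linarith)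
      have hd := hsteer2 (not_le.2 hmean)
      have hqup : q ≤ 1/((n:ℝ)+2)^2 := by
        have h2 := abs_lt.1 hd
        have h3 : α ≤ t := ht.1
        rw [hq]; linarith [h2.2]
      rcases le_or_gt 0 (P + q) with hPq|hPq
      · rw [abs_of_nonneg hPq]
        have hPn : P = u n := by rw [← hPabs, abs_of_nonneg hPge]
        exact le_max_of_le_right (by linarith)
      · rw [abs_of_neg hPq]
        have h4 : -(P + q) ≤ -q := by linarith
        have h5 : -q ≤ C := by
          rw [hq]
          have := abs_le.1 hyC'
          linarith [this.1]
        exact le_max_of_le_left (by linarith)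
  -- counting squares
  set G : ℕ → ℕ := fun n => ((Finset.range n).filter (fun k => Nat.sqrt k * Nat.sqrt k = k)).card
    with hG
  have hGmono : ∀ n, G n ≤ G (n+1) := fun n =>
    Finset.card_le_card (Finset.filter_subset_filter _ (Finset.range_subset_range.2 (Nat.le_succ n)))
  have hGsucc : ∀ n, Nat.sqrt n * Nat.sqrt n = n → G (n+1) = G n + 1 := by
    intro n hsq
    rw [hG]
    simp only
    rw [Finset.range_add_one, Finset.filter_insert, if_pos hsq, Finset.card_insert_of_notMem]
    intro h
    exact absurd (Finset.mem_range.1 (Finset.mem_filter.1 h).1) (lt_irrefl n)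
  have hGle : ∀ n, G n ≤ Nat.sqrt n + 1 := by
    intro n
    rw [hG]
    calc ((Finset.range n).filter (fun k => Nat.sqrt k * Nat.sqrt k = k)).card
        ≤ (Finset.range (Nat.sqrt n + 1)).card := by
          apply Finset.card_le_card_of_injOn Nat.sqrt
          · intro k hk
            rw [Finset.mem_coe, Finset.mem_filter, Finset.mem_range] at hk
            rw [Finset.mem_coe, Finset.mem_range]
            exact Nat.lt_succ_of_le (Nat.sqrt_le_sqrt hk.1.le)
          · intro k1 h1 k2 h2 hEq
            rw [Finset.mem_coe, Finset.mem_filter] at h1 h2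
            calc k1 = Nat.sqrt k1 * Nat.sqrt k1 := h1.2.symm
              _ = Nat.sqrt k2 * Nat.sqrt k2 := by rw [hEq]
              _ = k2 := h2.2
      _ = Nat.sqrt n + 1 := Finset.card_range _
  have hfrac : ∀ k : ℕ, 1/((k:ℝ)+2)^2 + 1/((k:ℝ)+2) ≤ 1/((k:ℝ)+1) := by
    intro k
    have h1 : (0:ℝ) < (k:ℝ)+1 := by positivity
    have h2 : (0:ℝ) < (k:ℝ)+2 := by positivity
    rw [div_add_div _ _ (by positivity : ((k:ℝ)+2)^2 ≠ 0) h2.ne', div_le_div_iff₀ (by positivity) h1]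
    nlinarith [sq_nonneg ((k:ℝ)+2), Nat.cast_nonneg (α := ℝ) k]
  have hmaster : ∀ n : ℕ, u n + 1/((n:ℝ)+1) ≤ C * (G n : ℝ) + C + 1 := by
    intro n
    induction n with
    | zero =>
      have hA0 : A 0 = s₀ := by rw [hA]; simp [finsetMean, hF0]
      have hu0' : u 0 = |s₀ - t| := by
        simp only [hu]
        rw [hA0]
        push_cast
        ring
      have h2 : |s₀ - t| ≤ C := hyC s₀ hs₀
      have h3 : (G 0 : ℝ) = 0 := by rw [hG]; simp
      rw [hu0', h3]
      norm_num
      linarith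
    | succ k ih =>
      have hcast : ((k+1:ℕ):ℝ) + 1 = (k:ℝ) + 2 := by push_cast; ring
      by_cases hcond : Nat.sqrt k * Nat.sqrt k = k ∧ e (Nat.sqrt k) ∉ F k
      · have h1 := hstep_bound k
        have h2 : (G (k+1) : ℝ) = (G k : ℝ) + 1 := by exact_mod_cast hGsucc k hcond.1
        have h3 : 1/((k:ℝ)+2) ≤ 1/((k:ℝ)+1) := by
          apply one_div_le_one_div_of_le (by positivity)
          linarith
        rw [hcast, h2]
        linarith
      · have h1 := hsteer_bound k hcond
        have hGm : (G k : ℝ) ≤ (G (k+1) : ℝ) := by exact_mod_cast hGmono k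
        have hCG : C * (G k : ℝ) ≤ C * (G (k+1) : ℝ) := mul_le_mul_of_nonneg_left hGm hC0
        have hCG0 : 0 ≤ C * (G (k+1) : ℝ) := le_trans (by positivity) hCG
        rw [hcast]
        rcases le_total (u k + 1/((k:ℝ)+2)^2) C with hm|hm
        · rw [max_eq_left hm] at h1
          have h4 : 1/((k:ℝ)+2) ≤ 1 := by
            rw [div_le_one (by positivity)]; linarith [Nat.cast_nonneg (α := ℝ) k]
          linarith
        · rw [max_eq_right hm] at h1
          have h5 := hfrac k
          linarith
  have hfinal : ∀ n : ℕ, |A n - t| ≤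
      C * (((Nat.sqrt n : ℝ))/((n:ℝ)+1)) + (2*C+1) * (1/((n:ℝ)+1)) := by
    intro n
    have h1 := hmaster n
    have hGn : (G n : ℝ) ≤ (Nat.sqrt n : ℝ) + 1 := by exact_mod_cast hGle n
    have hn1 : (0:ℝ) < (n:ℝ)+1 := by positivity
    have h2 : u n ≤ C * ((Nat.sqrt n:ℝ)+1) + C + 1 := by
      have := mul_le_mul_of_nonneg_left hGn hC0
      have := one_div_pos.2 hn1
      linarith
    have h3 : |A n - t| = u n / ((n:ℝ)+1) := by
      simp only [hu]
      field_simp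
    rw [h3, div_le_iff₀ hn1]
    calc u n ≤ C * ((Nat.sqrt n:ℝ)+1) + C + 1 := h2
      _ = (C * (((Nat.sqrt n : ℝ))/((n:ℝ)+1)) + (2*C+1) * (1/((n:ℝ)+1))) * ((n:ℝ)+1) := by
          field_simp
          ring
  have hB : Tendsto (fun n : ℕ => C * (((Nat.sqrt n : ℝ))/((n:ℝ)+1)) +
      (2*C+1) * (1/((n:ℝ)+1))) atTop (𝓝 0) := by
    have h1 := natSqrt_div_tendsto.const_mul C
    have h2 := tendsto_one_div_add_atTop_nhds_zero_nat.const_mul (2*C+1)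
    have h3 := h1.add h2
    simpa using h3
  have habs0 : Tendsto (fun n => |A n - t|) atTop (𝓝 0) :=
    squeeze_zero (fun n => abs_nonneg _) hfinal hB
  have : Tendsto A atTop (𝓝 t) := by
    rw [tendsto_iff_norm_sub_tendsto_zero]
    simpa [Real.norm_eq_abs] using habs0
  exact this

lemma tendsto_of_abs_le {f g : ℕ → ℝ} {a : ℝ} (hfg : ∀ n, |f n - a| ≤ g n)
    (hg : Tendsto g atTop (𝓝 0)) : Tendsto f atTop (𝓝 a) := by
  rw [tendsto_iff_norm_sub_tendsto_zero]
  exact squeeze_zero (fun n => norm_nonneg _) (by simpa [Real.norm_eq_abs] using hfg) hg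

lemma backward_dir (H : Set ℝ) (hbd : Bornology.IsBounded H) (hc : H.Countable) (x : ℝ)
    (hminf : (H ∩ Set.Iic x).Infinite) (hpinf : (H ∩ Set.Ici x).Infinite)
    {x₁ x₂ : ℝ}
    (hx₁ : x₁ ∈ Set.Icc (sInf (accPts (H ∩ Set.Iic x))) (sSup (accPts (H ∩ Set.Iic x))))
    (hx₂ : x₂ ∈ Set.Icc (sInf (accPts (H ∩ Set.Ici x))) (sSup (accPts (H ∩ Set.Ici x))))
    (hxeq : x = (x₁ + x₂) / 2) : x ∈ MSaxs H := by
  classical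
  set S₁ := H ∩ Set.Iic x with hS₁
  set S₂ := H ∩ Set.Ici x with hS₂
  have hb1 : Bornology.IsBounded S₁ := hbd.subset Set.inter_subset_left
  have hb2 : Bornology.IsBounded S₂ := hbd.subset Set.inter_subset_left
  have hc1 : S₁.Countable := hc.mono Set.inter_subset_left
  have hc2 : S₂.Countable := hc.mono Set.inter_subset_left
  have hS12 : S₁ ∪ S₂ = H := by
    apply Set.Subset.antisymm
    · exact Set.union_subset Set.inter_subset_left Set.inter_subset_left
    · intro h hh
      rcases le_total h x with h'|h'
      · exact Or.inl ⟨hh, h'⟩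
      · exact Or.inr ⟨hh, h'⟩
  have hsum2 : x₁ + x₂ = 2 * x := by linarith
  by_cases hxH : x ∈ H
  · -- x belongs to H; use x as the base point on both sides
    obtain ⟨F, hF0, hFmono, hFcard, hFsub, hFunion, hFt⟩ :=
      exists_approx hb1 hc1 hminf hx₁ (show x ∈ S₁ from ⟨hxH, le_refl x⟩)
    obtain ⟨G, hG0, hGmono, hGcard, hGsub, hGunion, hGt⟩ :=
      exists_approx hb2 hc2 hpinf hx₂ (show x ∈ S₂ from ⟨hxH, le_refl x⟩)
    have hFmono' : Monotone F := monotone_nat_of_le_succ hFmono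
    have hGmono' : Monotone G := monotone_nat_of_le_succ hGmono
    have hxF : ∀ n, x ∈ F n := fun n => hFmono' (Nat.zero_le n) (by rw [hF0]; simp)
    have hxG : ∀ n, x ∈ G n := fun n => hGmono' (Nat.zero_le n) (by rw [hG0]; simp)
    refine ⟨fun n => F n ∪ G n, fun n => Finset.union_subset_union (hFmono n) (hGmono n), ?_, ?_, ?_⟩
    · rw [show (fun n => ((F n ∪ G n : Finset ℝ) : Set ℝ)) = fun n => (↑(F n) ∪ ↑(G n)) from
        funext fun n => Finset.coe_union _ _] at *
      rw [Set.iUnion_union_distrib, hFunion, hGunion, hS12]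
    · intro n
      have hfilF : (F n ∪ G n).filter (fun z => z ≤ x) = F n := by
        ext z
        rw [Finset.mem_filter, Finset.mem_union]
        constructor
        · rintro ⟨hz1|hz1, hz2⟩
          · exact hz1
          · have : x ≤ z := (hGsub n hz1).2
            have : z = x := le_antisymm hz2 this
            rw [this]; exact hxF n
        · intro hz
          exact ⟨Or.inl hz, (hFsub n hz).2⟩
      have hfilG : (F n ∪ G n).filter (fun z => x ≤ z) = G n := by
        ext z
        rw [Finset.mem_filter, Finset.mem_union]
        constructor
        · rintro ⟨hz1|hz1, hz2⟩
          · have : z ≤ x := (hFsub n hz1).2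
            have : z = x := le_antisymm this hz2
            rw [this]; exact hxG n
          · exact hz1
        · intro hz
          exact ⟨Or.inr hz, (hGsub n hz).2⟩
      rw [hfilF, hfilG, hFcard, hGcard]
    · have hFG : ∀ n, F n ∩ G n = {x} := by
        intro n
        apply Finset.Subset.antisymm
        · intro z hz
          rw [Finset.mem_inter] at hz
          have h1 : z ≤ x := (hFsub n hz.1).2
          have h2 : x ≤ z := (hGsub n hz.2).2
          rw [Finset.mem_singleton]
          exact le_antisymm h1 h2
        · intro z hz
          rw [Finset.mem_singleton] at hz
          rw [hz, Finset.mem_inter]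
          exact ⟨hxF n, hxG n⟩
      have hmean_abs : ∀ n : ℕ, |finsetMean (F n ∪ G n) - x| ≤
          |finsetMean (F n) + finsetMean (G n) - 2*x| := by
        intro n
        have hsumU : (∑ z ∈ F n ∪ G n, z) =
            ((n:ℝ)+1) * finsetMean (F n) + ((n:ℝ)+1) * finsetMean (G n) - x := by
          have h1 := Finset.sum_union_inter (s₁ := F n) (s₂ := G n) (f := fun z => z)
          rw [hFG n] at h1
          simp only [Finset.sum_singleton] at h1
          have h2 : (∑ z ∈ F n, z) = ((n:ℝ)+1) * finsetMean (F n) := by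
            rw [finsetMean, hFcard n]
            push_cast
            field_simp
          have h3 : (∑ z ∈ G n, z) = ((n:ℝ)+1) * finsetMean (G n) := by
            rw [finsetMean, hGcard n]
            push_cast
            field_simp
          linarith
        have hcardU : ((F n ∪ G n).card : ℝ) = 2*(n:ℝ)+1 := by
          have h1 := Finset.card_union_add_card_inter (F n) (G n)
          rw [hFG n, hFcard n, hGcard n] at h1
          simp only [Finset.card_singleton] at h1
          have : (F n ∪ G n).card = 2*n+1 := by omega
          rw [this]; push_cast; ring
        have h2n1 : (2*(n:ℝ)+1) > 0 := by positivity
        have hmeq : finsetMean (F n ∪ G n) - x =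
            (((n:ℝ)+1) * (finsetMean (F n) + finsetMean (G n) - 2*x)) / (2*(n:ℝ)+1) := by
          rw [finsetMean, hsumU, hcardU]
          field_simp
          ring
        rw [hmeq, abs_div, abs_mul, abs_of_pos h2n1,
          abs_of_nonneg (by positivity : (0:ℝ) ≤ (n:ℝ)+1), div_le_iff₀ h2n1]
        nlinarith [abs_nonneg (finsetMean (F n) + finsetMean (G n) - 2*x)]
      apply tendsto_of_abs_le hmean_abs
      have h1 : Tendsto (fun n => finsetMean (F n) + finsetMean (G n)) atTop (𝓝 (2*x)) := by
        rw [← hsum2]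
        exact hFt.add hGt
      have h2 := tendsto_iff_norm_sub_tendsto_zero.1 h1
      simpa [Real.norm_eq_abs] using h2
  · -- x ∉ H
    obtain ⟨s₁, hs₁⟩ := hminf.nonempty
    obtain ⟨s₂, hs₂⟩ := hpinf.nonempty
    obtain ⟨F, hF0, hFmono, hFcard, hFsub, hFunion, hFt⟩ :=
      exists_approx hb1 hc1 hminf hx₁ hs₁
    obtain ⟨G, hG0, hGmono, hGcard, hGsub, hGunion, hGt⟩ :=
      exists_approx hb2 hc2 hpinf hx₂ hs₂
    have hnex : ∀ {z : ℝ} {n : ℕ}, z ∈ F n → z ∈ G n → False := by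
      intro z n h1 h2
      have ha : z ≤ x := (hFsub n h1).2
      have hb : x ≤ z := (hGsub n h2).2
      have : z = x := le_antisymm ha hb
      exact hxH (this ▸ (hFsub n h1).1)
    refine ⟨fun n => F n ∪ G n, fun n => Finset.union_subset_union (hFmono n) (hGmono n), ?_, ?_, ?_⟩
    · rw [show (fun n => ((F n ∪ G n : Finset ℝ) : Set ℝ)) = fun n => (↑(F n) ∪ ↑(G n)) from
        funext fun n => Finset.coe_union _ _] at *
      rw [Set.iUnion_union_distrib, hFunion, hGunion, hS12]
    · intro n
      have hfilF : (F n ∪ G n).filter (fun z => z ≤ x) = F n := by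
        ext z
        rw [Finset.mem_filter, Finset.mem_union]
        constructor
        · rintro ⟨hz1|hz1, hz2⟩
          · exact hz1
          · have h2 : x ≤ z := (hGsub n hz1).2
            have : z = x := le_antisymm hz2 h2
            exact absurd (this ▸ (hGsub n hz1).1) hxH
        · intro hz
          exact ⟨Or.inl hz, (hFsub n hz).2⟩
      have hfilG : (F n ∪ G n).filter (fun z => x ≤ z) = G n := by
        ext z
        rw [Finset.mem_filter, Finset.mem_union]
        constructor
        · rintro ⟨hz1|hz1, hz2⟩
          · have h2 : z ≤ x := (hFsub n hz1).2
            have : z = x := le_antisymm h2 hz2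
            exact absurd (this ▸ (hFsub n hz1).1) hxH
          · exact hz1
        · intro hz
          exact ⟨Or.inr hz, (hGsub n hz).2⟩
      rw [hfilF, hfilG, hFcard, hGcard]
    · have hdisj : ∀ n, Disjoint (F n) (G n) := by
        intro n
        rw [Finset.disjoint_left]
        intro z h1 h2
        exact hnex h1 h2
      have hmean_abs : ∀ n : ℕ, |finsetMean (F n ∪ G n) - x| ≤
          |finsetMean (F n) + finsetMean (G n) - 2*x| := by
        intro n
        have hsumU : (∑ z ∈ F n ∪ G n, z) =
            ((n:ℝ)+1) * finsetMean (F n) + ((n:ℝ)+1) * finsetMean (G n) := by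
          rw [Finset.sum_union (hdisj n)]
          have h2 : (∑ z ∈ F n, z) = ((n:ℝ)+1) * finsetMean (F n) := by
            rw [finsetMean, hFcard n]; push_cast; field_simp
          have h3 : (∑ z ∈ G n, z) = ((n:ℝ)+1) * finsetMean (G n) := by
            rw [finsetMean, hGcard n]; push_cast; field_simp
          linarith
        have hcardU : ((F n ∪ G n).card : ℝ) = 2*(n:ℝ)+2 := by
          rw [Finset.card_union_of_disjoint (hdisj n), hFcard n, hGcard n]
          push_cast; ring
        have h2n1 : (2*(n:ℝ)+2) > 0 := by positivity
        have hmeq : finsetMean (F n ∪ G n) - x =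
            (((n:ℝ)+1) * (finsetMean (F n) + finsetMean (G n) - 2*x)) / (2*(n:ℝ)+2) := by
          rw [finsetMean, hsumU, hcardU]
          field_simp
        rw [hmeq, abs_div, abs_mul, abs_of_pos h2n1,
          abs_of_nonneg (by positivity : (0:ℝ) ≤ (n:ℝ)+1), div_le_iff₀ h2n1]
        nlinarith [abs_nonneg (finsetMean (F n) + finsetMean (G n) - 2*x)]
      apply tendsto_of_abs_le hmean_abs
      have h1 : Tendsto (fun n => finsetMean (F n) + finsetMean (G n)) atTop (𝓝 (2*x)) := by
        rw [← hsum2]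
        exact hFt.add hGt
      have h2 := tendsto_iff_norm_sub_tendsto_zero.1 h1
      simpa [Real.norm_eq_abs] using h2

lemma tendsto_of_abs_le' {f g : ℕ → ℝ} {a : ℝ} (hfg : ∀ᶠ n in atTop, |f n - a| ≤ g n)
    (hg : Tendsto g atTop (𝓝 0)) : Tendsto f atTop (𝓝 a) := by
  rw [tendsto_iff_norm_sub_tendsto_zero]
  exact squeeze_zero' (Eventually.of_forall fun n => norm_nonneg _)
    (by simpa [Real.norm_eq_abs] using hfg) hg

lemma finsetMean_abs_le {F : Finset ℝ} {M : ℝ} (hM0 : 0 ≤ M) (h : ∀ z ∈ F, |z| ≤ M) :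
    |finsetMean F| ≤ M := by
  rcases Finset.eq_empty_or_nonempty F with rfl|hne
  · simpa [finsetMean] using hM0
  · have hcard : (0:ℝ) < (F.card : ℝ) := by exact_mod_cast Finset.card_pos.2 hne
    rw [finsetMean, abs_div, abs_of_pos hcard, div_le_iff₀ hcard]
    calc |∑ z ∈ F, z| ≤ ∑ z ∈ F, |z| := Finset.abs_sum_le_sum_abs _ _
      _ ≤ F.card • M := Finset.sum_le_card_nsmul _ _ _ h
      _ = M * F.card := by rw [nsmul_eq_mul]; ring

lemma forward_dir (H : Set ℝ) (hbd : Bornology.IsBounded H) (x : ℝ)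
    (hminf : (H ∩ Set.Iic x).Infinite) (hpinf : (H ∩ Set.Ici x).Infinite)
    (hx : x ∈ MSaxs H) :
    ∃ x₁ ∈ Set.Icc (sInf (accPts (H ∩ Set.Iic x))) (sSup (accPts (H ∩ Set.Iic x))),
      ∃ x₂ ∈ Set.Icc (sInf (accPts (H ∩ Set.Ici x))) (sSup (accPts (H ∩ Set.Ici x))),
        x = (x₁ + x₂) / 2 := by
  classical
  obtain ⟨Hn, hmonoS, hunion, hsym, hmean⟩ := hx
  set S₁ := H ∩ Set.Iic x with hS₁
  set S₂ := H ∩ Set.Ici x with hS₂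
  have hb1 : Bornology.IsBounded S₁ := hbd.subset Set.inter_subset_left
  have hb2 : Bornology.IsBounded S₂ := hbd.subset Set.inter_subset_left
  have hmono' : Monotone Hn := monotone_nat_of_le_succ hmonoS
  have hHsub : ∀ n, (Hn n : Set ℝ) ⊆ H := fun n => by
    rw [← hunion]; exact Set.subset_iUnion (fun n => ((Hn n : Set ℝ))) n
  set Fn : ℕ → Finset ℝ := fun n => (Hn n).filter (fun z => z ≤ x) with hFn
  set Gn : ℕ → Finset ℝ := fun n => (Hn n).filter (fun z => x ≤ z) with hGn
  have hFsub : ∀ n, (Fn n : Set ℝ) ⊆ S₁ := by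
    intro n z hz
    rw [Finset.mem_coe, hFn, Finset.mem_filter] at hz
    exact ⟨hHsub n hz.1, hz.2⟩
  have hGsub : ∀ n, (Gn n : Set ℝ) ⊆ S₂ := by
    intro n z hz
    rw [Finset.mem_coe, hGn, Finset.mem_filter] at hz
    exact ⟨hHsub n hz.1, hz.2⟩
  -- cardinalities tend to infinity
  have hktop : Tendsto (fun n => (Fn n).card) atTop atTop := by
    rw [tendsto_atTop_atTop]
    intro b
    obtain ⟨T, hTsub, hTcard⟩ := hminf.exists_subset_card_eq b
    have hnex : ∀ z ∈ T, ∃ N, z ∈ Hn N := by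
      intro z hz
      have h1 : (z:ℝ) ∈ ⋃ n, ((Hn n : Set ℝ)) := hunion ▸ (hTsub hz).1
      obtain ⟨i, hi⟩ := Set.mem_iUnion.1 h1
      exact ⟨i, hi⟩
    set f : ℝ → ℕ := fun z => if h : ∃ N, z ∈ Hn N then Nat.find h else 0 with hf
    refine ⟨T.sup f, fun n hn => ?_⟩
    have hTF : T ⊆ Fn n := by
      intro z hz
      have hex := hnex z hz
      have h1 : z ∈ Hn (f z) := by
        simp only [hf, dif_pos hex]
        exact Nat.find_spec hex
      have h2 : f z ≤ T.sup f := Finset.le_sup hz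
      have h3 : z ∈ Hn n := hmono' (le_trans h2 hn) h1
      rw [hFn, Finset.mem_filter]
      exact ⟨h3, (hTsub hz).2⟩
    calc b = T.card := hTcard.symm
      _ ≤ (Fn n).card := Finset.card_le_card hTF
  have hktopG : Tendsto (fun n => (Gn n).card) atTop atTop := by
    have : (fun n => (Gn n).card) = fun n => (Fn n).card := funext fun n => (hsym n).symm
    rw [this]; exact hktop
  set AF : ℕ → ℝ := fun n => finsetMean (Fn n) with hAF
  set AG : ℕ → ℝ := fun n => finsetMean (Gn n) with hAG
  obtain ⟨M, hM0, hM⟩ := exists_bound hbd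
  have hAFbdd : ∀ n, AF n ∈ Set.Icc (-M) M := by
    intro n
    rw [Set.mem_Icc, ← abs_le]
    exact finsetMean_abs_le hM0 (fun z hz => hM z ((hFsub n) hz).1)
  have hAGbdd : ∀ n, |AG n| ≤ M := fun n =>
    finsetMean_abs_le hM0 (fun z hz => hM z ((hGsub n) hz).1)
  -- the sum of the two means tends to 2x
  have hAB : Tendsto (fun n => AF n + AG n) atTop (𝓝 (2*x)) := by
    apply tendsto_of_abs_le' (g := fun n => 2 * |finsetMean (Hn n) - x|)
    · filter_upwards [hktop.eventually_ge_atTop 1] with n hk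
      set E : Finset ℝ := (Gn n).filter (fun z => z ≤ x) with hE
      have hEx : ∀ z ∈ E, z = x := by
        intro z hz
        rw [hE, Finset.mem_filter, hGn, Finset.mem_filter] at hz
        exact le_antisymm hz.2 hz.1.2
      have hsE : ∑ z ∈ E, z = (E.card : ℝ) * x := by
        rw [Finset.sum_congr rfl hEx, Finset.sum_const, nsmul_eq_mul]
      have hGF : (Gn n).filter (fun z => ¬ z ≤ x) = (Hn n).filter (fun z => ¬ z ≤ x) := by
        rw [hGn, Finset.filter_filter]
        apply Finset.filter_congr
        intro z _
        constructor
        · rintro ⟨_, h2⟩; exact h2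
        · intro h2; exact ⟨le_of_not_ge h2, h2⟩
      have hsumG : ∑ z ∈ Gn n, z = (E.card : ℝ) * x + ∑ z ∈ (Hn n).filter (fun z => ¬ z ≤ x), z := by
        rw [← hsE, ← hGF]
        exact (Finset.sum_filter_add_sum_filter_not (Gn n) (fun z => z ≤ x) (fun z => z)).symm
      have hsumH : ∑ z ∈ Fn n, z + ∑ z ∈ (Hn n).filter (fun z => ¬ z ≤ x), z = ∑ z ∈ Hn n, z := by
        rw [hFn]
        exact Finset.sum_filter_add_sum_filter_not (Hn n) (fun z => z ≤ x) (fun z => z)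
      have hcardG : (Gn n).card = E.card + ((Hn n).filter (fun z => ¬ z ≤ x)).card := by
        rw [← hGF, hE]
        exact (Finset.card_filter_add_card_filter_not (s := Gn n)
          (p := fun z => z ≤ x)).symm
      have hcardH : (Fn n).card + ((Hn n).filter (fun z => ¬ z ≤ x)).card = (Hn n).card := by
        rw [hFn]
        exact Finset.card_filter_add_card_filter_not (s := Hn n) (p := fun z => z ≤ x)
      set k := (Fn n).card with hk'
      set c := E.card with hc'
      set m := (Hn n).card with hm'
      have hkG : (Gn n).card = k := (hsym n).symm
      have e2 : (m:ℝ) + c = 2 * k := by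
        have : m + c = 2 * k := by omega
        exact_mod_cast this
      have hk0 : (0:ℝ) < k := by exact_mod_cast hk
      have hm1 : 1 ≤ m := by omega
      have hm0 : (0:ℝ) < m := by exact_mod_cast hm1
      have e1 : (k:ℝ) * (AF n + AG n) = (∑ z ∈ Hn n, z) + c * x := by
        have hAFe : (k:ℝ) * AF n = ∑ z ∈ Fn n, z := by
          rw [hAF]
          simp only [finsetMean, ← hk']
          field_simp
        have hAGe : (k:ℝ) * AG n = ∑ z ∈ Gn n, z := by
          rw [hAG]
          simp only [finsetMean, hkG]
          field_simp
        rw [mul_add, hAFe, hAGe, hsumG]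
        linarith [hsumH]
      have e3 : (m:ℝ) * finsetMean (Hn n) = ∑ z ∈ Hn n, z := by
        simp only [finsetMean, ← hm']
        field_simp
      have key : (k:ℝ) * (AF n + AG n - 2*x) = (m:ℝ) * (finsetMean (Hn n) - x) := by
        linear_combination e1 - e3 + x * e2
      have habs : (k:ℝ) * |AF n + AG n - 2*x| = (m:ℝ) * |finsetMean (Hn n) - x| := by
        rw [← abs_of_pos hk0, ← abs_mul, key, abs_mul, abs_of_pos hm0]
      have hm2k : (m:ℝ) ≤ 2*k := by
        have hc0 : (0:ℝ) ≤ c := Nat.cast_nonneg c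
        linarith
      nlinarith [abs_nonneg (finsetMean (Hn n) - x), abs_nonneg (AF n + AG n - 2*x), habs]
    · have h1 := tendsto_iff_norm_sub_tendsto_zero.1 hmean
      have h2 : Tendsto (fun n => 2 * ‖finsetMean (Hn n) - x‖) atTop (𝓝 (2*0)) :=
        h1.const_mul 2
      simpa [Real.norm_eq_abs] using h2
  -- extract a convergent subsequence of AF
  obtain ⟨x₁, _, φ, hφmono, hφt⟩ :=
    tendsto_subseq_of_bounded (Metric.isBounded_Icc (-M) M) hAFbdd
  have hφatTop : Tendsto φ atTop atTop := hφmono.tendsto_atTop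
  have hφt' : Tendsto (fun n => AF (φ n)) atTop (𝓝 x₁) := hφt
  have hGlim : Tendsto (fun n => AG (φ n)) atTop (𝓝 (2*x - x₁)) := by
    have h1 : Tendsto (fun n => AF (φ n) + AG (φ n)) atTop (𝓝 (2*x)) := by
      have := hAB.comp hφatTop
      exact this
    have h2 := h1.sub hφt'
    simpa using h2
  refine ⟨x₁, ⟨?_, ?_⟩, 2*x - x₁, ⟨?_, ?_⟩, by ring⟩
  · apply le_of_forall_pos_le_add
    intro ε hε
    have hev := eventually_mean_bounds hb1 hminf hε Fn hFsub hktop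
    have hev2 : ∀ᶠ n in atTop, sInf (accPts S₁) - ε ≤ AF (φ n) :=
      hφatTop.eventually (hev.mono fun n h => h.2)
    have := ge_of_tendsto hφt' hev2
    linarith
  · apply le_of_forall_pos_le_add
    intro ε hε
    have hev := eventually_mean_bounds hb1 hminf hε Fn hFsub hktop
    have hev2 : ∀ᶠ n in atTop, AF (φ n) ≤ sSup (accPts S₁) + ε :=
      hφatTop.eventually (hev.mono fun n h => h.1)
    exact le_of_tendsto hφt' hev2
  · apply le_of_forall_pos_le_add
    intro ε hε
    have hev := eventually_mean_bounds hb2 hpinf hε Gn hGsub hktopG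
    have hev2 : ∀ᶠ n in atTop, sInf (accPts S₂) - ε ≤ AG (φ n) :=
      hφatTop.eventually (hev.mono fun n h => h.2)
    have := ge_of_tendsto hGlim hev2
    linarith
  · apply le_of_forall_pos_le_add
    intro ε hε
    have hev := eventually_mean_bounds hb2 hpinf hε Gn hGsub hktopG
    have hev2 : ∀ᶠ n in atTop, AG (φ n) ≤ sSup (accPts S₂) + ε :=
      hφatTop.eventually (hev.mono fun n h => h.1)
    exact le_of_tendsto hGlim hev2


/-- characterization of membership in `MS^axs(H)`. -/
theorem mem_msaxs_iff (H : Set ℝ) (hbd : Bornology.IsBounded H)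
    (hc : H.Countable) (hi : H.Infinite) (x : ℝ)
    (hminf : (H ∩ Set.Iic x).Infinite) (hpinf : (H ∩ Set.Ici x).Infinite) :
    x ∈ MSaxs H ↔
      ∃ x₁ ∈ Set.Icc (sInf (accPts (H ∩ Set.Iic x))) (sSup (accPts (H ∩ Set.Iic x))),
        ∃ x₂ ∈ Set.Icc (sInf (accPts (H ∩ Set.Ici x))) (sSup (accPts (H ∩ Set.Ici x))),
          x = (x₁ + x₂) / 2 := by
  constructor
  · intro hx
    exact forward_dir H hbd x hminf hpinf hx
  · rintro ⟨x₁, hx₁, x₂, hx₂, hxeq⟩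
    exact backward_dir H hbd hc x hminf hpinf hx₁ hx₂ hxeq
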